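/- Let G be a hyperbolic group with finitely many cone types, growth rate λ > 1, and Coornaert bound |B(r)| ≤ α·λ^r. Call a cone type T essential if there exists a > 0 such that for all r there is s ≥ r with |T ∩ B(s)| ≥ a·λ^s; call g ∈ G essential if T_g is. If g ∈ G and u ∈ T_g with gu essential, then g is essential. -/

import Mathlib

open Filter Set

/-- Word length of `g` with respect to the symmetrized generating set `S ∪ S⁻¹`. -/
noncomputable def wordLength {G : Type*} [Group G] (S : Set G) (g : G) : ℕ :=
  sInf {n | ∃ l : List G, l.length = n ∧ (∀ x ∈ l, x ∈ S ∪ S⁻¹) ∧ l.prod = g}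

/-- The ball of radius `r` in the word metric. -/
noncomputable def wordBall {G : Type*} [Group G] (S : Set G) (r : ℕ) : Set G :=
  {g | wordLength S g ≤ r}

/-- The cone type of `g`: the set of `u` such that some geodesic from `1` to `gu` passes
through `g`, i.e. `|gu| = |g| + |u|`. -/
noncomputable def coneType {G : Type*} [Group G] (S : Set G) (g : G) : Set G :=
  {u | wordLength S (g * u) = wordLength S g + wordLength S u}

/-- `g` is essential (its cone type is essential): there is `a > 0` such that for every `r`
there is `s ≥ r` with `|T_g ∩ B(s)| ≥ a·λ^s`. -/
def Essential {G : Type*} [Group G] (S : Set G) (lam : ℝ) (g : G) : Prop :=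
  ∃ a > (0 : ℝ), ∀ r : ℕ, ∃ s ≥ r, a * lam ^ s ≤ ((coneType S g ∩ wordBall S s).ncard : ℝ)

section Aux

variable {G : Type*} [Group G] {S : Set G}

lemma wordLength_rep_nonempty (hgen : Subgroup.closure S = ⊤) (g : G) :
    {n | ∃ l : List G, l.length = n ∧ (∀ x ∈ l, x ∈ S ∪ S⁻¹) ∧ l.prod = g}.Nonempty := by
  have hg : g ∈ Submonoid.closure (S ∪ S⁻¹) := by
    rw [← Subgroup.closure_toSubmonoid]
    simp [hgen]
  obtain ⟨l, hl, hp⟩ := Submonoid.exists_list_of_mem_closure hg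
  exact ⟨l.length, l, rfl, hl, hp⟩

lemma exists_wordLength_list (hgen : Subgroup.closure S = ⊤) (g : G) :
    ∃ l : List G, l.length = wordLength S g ∧ (∀ x ∈ l, x ∈ S ∪ S⁻¹) ∧ l.prod = g :=
  Nat.sInf_mem (wordLength_rep_nonempty hgen g)

lemma wordLength_mul_le (hgen : Subgroup.closure S = ⊤) (a b : G) :
    wordLength S (a * b) ≤ wordLength S a + wordLength S b := by
  obtain ⟨l1, h1, m1, p1⟩ := exists_wordLength_list hgen a
  obtain ⟨l2, h2, m2, p2⟩ := exists_wordLength_list hgen b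
  refine Nat.sInf_le ⟨l1 ++ l2, by simp [h1, h2], ?_, by simp [p1, p2]⟩
  intro x hx
  rcases List.mem_append.1 hx with h | h
  exacts [m1 x h, m2 x h]

lemma wordBall_finite (S : Finset G) (hgen : Subgroup.closure (S : Set G) = ⊤) (r : ℕ) :
    (wordBall (S : Set G) r).Finite := by
  set T : Set G := (S : Set G) ∪ (S : Set G)⁻¹ with hTdef
  have hTfin : T.Finite := S.finite_toSet.union (S.finite_toSet.inv)
  have : Finite ↥T := hTfin
  have hball : wordBall (S : Set G) r ⊆
      (fun l : List ↥T => (l.map Subtype.val).prod) '' {l | l.length ≤ r} := by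
    intro g hg
    obtain ⟨l, hlen, hmem, hprod⟩ := exists_wordLength_list hgen g
    refine ⟨l.attach.map (fun x => (⟨x.1, hmem x.1 x.2⟩ : ↥T)), by have hg' : wordLength (S : Set G) g ≤ r := hg; simpa [hlen] using hg', ?_⟩
    simp only [List.map_map]
    have : (l.attach.map ((Subtype.val : ↥T → G) ∘ fun x => (⟨x.1, hmem x.1 x.2⟩ : ↥T)))
        = l := by
      simp [Function.comp]
    rw [this, hprod]
  exact ((List.finite_length_le ↥T r).image _).subset hball

end Aux

/-- In a hyperbolic group with finitely many cone types, growth rate `λ > 1` and Coornaert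
bound `|B(r)| ≤ α·λ^r`: if `u ∈ T_g` and `gu` is essential, then `g` is essential. -/
theorem essential_of_extension_essential {G : Type*} [Group G] (S : Finset G)
    (hgen : Subgroup.closure (S : Set G) = ⊤) (lam α : ℝ) (hlam : 1 < lam) (hα : 1 ≤ α)
    (hcoo : ∀ r : ℕ, ((wordBall (S : Set G) r).ncard : ℝ) ≤ α * lam ^ r)
    (hfin : (Set.range (coneType (S : Set G))).Finite)
    (g u : G) (hu : u ∈ coneType (S : Set G) g)
    (hess : Essential (S : Set G) lam (g * u)) :
    Essential (S : Set G) lam g := by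
  classical
  obtain ⟨a, ha, hA⟩ := hess
  have hlam0 : (0 : ℝ) < lam := lt_trans one_pos hlam
  set n := wordLength (S : Set G) u with hn
  refine ⟨a / lam ^ n, by positivity, fun r => ?_⟩
  obtain ⟨s, hs, hcard⟩ := hA r
  refine ⟨s + n, le_trans hs (Nat.le_add_right _ _), ?_⟩
  have hu' : wordLength (S : Set G) (g * u)
      = wordLength (S : Set G) g + wordLength (S : Set G) u := hu
  have key : (fun v => u * v) '' (coneType (S : Set G) (g * u) ∩ wordBall (S : Set G) s)
      ⊆ coneType (S : Set G) g ∩ wordBall (S : Set G) (s + n) := by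
    rintro _ ⟨v, ⟨hv, hvb⟩, rfl⟩
    have hv' : wordLength (S : Set G) (g * u * v)
        = wordLength (S : Set G) (g * u) + wordLength (S : Set G) v := hv
    have htri : wordLength (S : Set G) (u * v) ≤ n + wordLength (S : Set G) v :=
      wordLength_mul_le hgen u v
    have htri2 : wordLength (S : Set G) (g * (u * v))
        ≤ wordLength (S : Set G) g + wordLength (S : Set G) (u * v) :=
      wordLength_mul_le hgen g (u * v)
    have heq : wordLength (S : Set G) (g * (u * v))
        = wordLength (S : Set G) g + n + wordLength (S : Set G) v := by
      rw [← mul_assoc, hv', hu']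
    have hvb' : wordLength (S : Set G) v ≤ s := hvb
    constructor
    · show wordLength (S : Set G) (g * (u * v))
        = wordLength (S : Set G) g + wordLength (S : Set G) (u * v)
      omega
    · show wordLength (S : Set G) (u * v) ≤ s + n
      omega
  have h1 : (coneType (S : Set G) (g * u) ∩ wordBall (S : Set G) s).ncard
      ≤ (coneType (S : Set G) g ∩ wordBall (S : Set G) (s + n)).ncard := by
    rw [← Set.ncard_image_of_injective _ (mul_right_injective u)]
    exact Set.ncard_le_ncard key
      ((wordBall_finite S hgen (s + n)).subset Set.inter_subset_right)
  calc a / lam ^ n * lam ^ (s + n) = a * lam ^ s := by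
        rw [pow_add]
        field_simp
    _ ≤ _ := hcard
    _ ≤ _ := Nat.cast_le.2 h1
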